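/- For a string S over Σ with |Σ| ≥ 4, a substring P of S is (τ,k)-resilient with respect to modified strings over Σ if and only if it is (τ,k)-resilient with respect to modified strings over Σ ∪ {#} for a fresh letter # ∉ Σ. That is, P is τ-frequent in every S' ∈ Σ^n with d_H(S,S') ≤ k if and only if P is τ-frequent in every S'' ∈ (Σ∪{#})^n with d_H(S,S'') ≤ k. -/

import Mathlib

open Classical

/-- `p` is a period of the string (list) `P`. -/
def IsPeriodOf {α : Type*} (P : List α) (p : ℕ) : Prop :=
  0 < p ∧ ∀ i, i + p < P.length → P[i]? = P[(i + p)]?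

/-- The smallest period of `P`. -/
noncomputable def minPeriod {α : Type*} (P : List α) : ℕ := sInf {p | IsPeriodOf P p}

/-- `P` is periodic if its smallest period is at most `|P|/2`. -/
def ListPeriodic {α : Type*} (P : List α) : Prop := 2 * minPeriod P ≤ P.length

/-- `P` occurs in `S` starting at position `i`. -/
def OccursAt {α : Type*} (P S : List α) (i : ℕ) : Prop :=
  i + P.length ≤ S.length ∧ (S.drop i).take P.length = P

/-- The set of starting positions of occurrences of `P` in `S`. -/
noncomputable def occ {α : Type*} (P S : List α) : Finset ℕ :=
  (Finset.range (S.length + 1)).filter (fun i => OccursAt P S i)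

/-- Hamming distance between two (equal-length) strings. -/
noncomputable def hamming {α : Type*} (S T : List α) : ℕ :=
  ((List.range S.length).filter (fun i => S[i]? ≠ T[i]?)).length

/-- `P` is `(τ,k)`-resilient in `S`. -/
def Resilient {α : Type*} (P S : List α) (τ k : ℕ) : Prop :=
  ∀ S' : List α, S'.length = S.length → hamming S S' ≤ k → τ ≤ (occ P S').card

/-- The fragment `S[x..y]` (inclusive). -/
def frag {α : Type*} (S : List α) (x y : ℕ) : List α := (S.drop x).take (y - x + 1)

/-- The fragment `S[x..y]` is a run of `S`. -/
def IsRun {α : Type*} (S : List α) (x y : ℕ) : Prop :=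
  x ≤ y ∧ y < S.length ∧ 2 * minPeriod (frag S x y) ≤ y - x + 1 ∧
  (0 < x → ¬ IsPeriodOf (frag S (x - 1) y) (minPeriod (frag S x y))) ∧
  (y + 1 < S.length → ¬ IsPeriodOf (frag S x (y + 1)) (minPeriod (frag S x y)))

/- ---------- auxiliary lemmas ---------- -/

lemma occursAt_iff_get {α : Type*} {P S : List α} {i : ℕ} :
    OccursAt P S i ↔ i + P.length ≤ S.length ∧
      ∀ t, t < P.length → S[(i + t)]? = P[t]? := by
  constructor
  · rintro ⟨h1, h2⟩
    refine ⟨h1, fun t ht => ?_⟩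
    conv_rhs => rw [← h2]
    rw [List.getElem?_take_of_lt ht, List.getElem?_drop]
  · rintro ⟨h1, h2⟩
    refine ⟨h1, ?_⟩
    apply List.ext_getElem?
    intro n
    by_cases hn : n < P.length
    · rw [List.getElem?_take_of_lt hn, List.getElem?_drop, h2 n hn]
    · rw [List.getElem?_eq_none_iff.2, List.getElem?_eq_none_iff.2]
      · omega
      · simp only [List.length_take, List.length_drop]; omega

lemma pair_lemma {α : Type*} {P : List α} {X : List (Option α)} {j o1 o2 : ℕ}
    (h2j : o2 ≤ j) (hlt : o1 < o2)
    (h1m : ∀ t, t < P.length → t ≠ o1 → X[(j - o1 + t)]? = (P.map some)[t]?)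
    (h2m : ∀ t, t < P.length → t ≠ o2 → X[(j - o2 + t)]? = (P.map some)[t]?) :
    ∀ t, t + (o2 - o1) < P.length → t ≠ o1 → P[t]? = P[t + (o2 - o1)]? := by
  intro t htp htne
  have e1 := h1m t (by omega) htne
  have e2 := h2m (t + (o2 - o1)) htp (by omega)
  have hpos : j - o1 + t = j - o2 + (t + (o2 - o1)) := by omega
  rw [hpos, e2] at e1
  rw [List.getElem?_map, List.getElem?_map] at e1
  exact (Option.map_injective (Option.some_injective α) e1).symm

lemma triple_lemma {α : Type*} {P : List α} {X : List (Option α)} {j o1 o2 o3 : ℕ}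
    (h2j : o2 ≤ j) (h3j : o3 ≤ j) (h3P : o3 < P.length)
    (h12 : o1 < o2) (h23 : o2 < o3)
    (h1m : ∀ t, t < P.length → t ≠ o1 → X[(j - o1 + t)]? = (P.map some)[t]?)
    (h2m : ∀ t, t < P.length → t ≠ o2 → X[(j - o2 + t)]? = (P.map some)[t]?)
    (h3m : ∀ t, t < P.length → t ≠ o3 → X[(j - o3 + t)]? = (P.map some)[t]?) :
    P[o1]? = P[o3]? := by
  have A := pair_lemma h2j h12 h1m h2m (o1 + (o3 - o2)) (by omega) (by omega)
  have B := pair_lemma h3j h23 h2m h3m o1 (by omega) (by omega)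
  have e : o1 + (o3 - o2) + (o2 - o1) = o3 := by omega
  rw [e] at A
  rw [B, A]

lemma countP_set_lt {α : Type*} (c : α) : ∀ (l : List (Option α)) (j : ℕ),
    l[j]? = some none →
    (l.set j (some c)).countP (fun x => decide (x = none)) <
      l.countP (fun x => decide (x = none)) := by
  intro l
  induction l with
  | nil => intro j h; simp at h
  | cons a tl ih =>
    intro j h
    cases j with
    | zero =>
      simp only [List.getElem?_cons_zero, Option.some.injEq] at h
      subst h
      simp [List.countP_cons]
    | succ j =>
      simp only [List.getElem?_cons_succ] at h
      have := ih j h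
      simp only [List.set, List.countP_cons]
      omega

lemma hamming_map_some {α : Type*} (S S' : List α) :
    hamming (S.map some) (S'.map some) = hamming S S' := by
  unfold hamming
  rw [List.length_map]
  congr 1
  apply List.filter_congr
  intro i _
  simp only [List.getElem?_map, decide_eq_decide]
  constructor
  · intro h hc; exact h (by rw [hc])
  · intro h hc
    exact h (Option.map_injective (Option.some_injective α) hc)

lemma take_drop_map {α : Type*} {β : Type*} (f : α → β) (l : List α) (i n : ℕ) :
    ((l.map f).drop i).take n = ((l.drop i).take n).map f := by
  rw [List.map_take, List.map_drop]

lemma occ_map_some {α : Type*} (P S' : List α) :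
    occ (P.map some) (S'.map some) = occ P S' := by
  unfold occ OccursAt
  rw [List.length_map, List.length_map]
  apply Finset.ext
  intro i
  simp only [Finset.mem_filter, Finset.mem_range]
  rw [take_drop_map]
  refine and_congr Iff.rfl (and_congr Iff.rfl ?_)
  constructor
  · intro h2
    exact List.map_injective_iff.2 (Option.some_injective α) h2
  · intro h2
    rw [h2]

lemma hamming_set_le {α : Type*} {S : List α} {S'' : List (Option α)} {j : ℕ}
    (hlen : S''.length = S.length) (hj : S''[j]? = some none) (c : α) :
    hamming (S.map some) (S''.set j (some c)) ≤ hamming (S.map some) S'' := by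
  unfold hamming
  rw [← List.countP_eq_length_filter, ← List.countP_eq_length_filter]
  apply List.countP_mono_left
  intro i hi
  simp only [decide_eq_true_eq]
  intro hp
  by_cases hij : i = j
  · subst hij
    have hjlen : i < S''.length := by
      by_contra hge
      rw [List.getElem?_eq_none_iff.2 (by omega)] at hj
      exact absurd hj (by simp)
    rw [hj, List.getElem?_map, List.getElem?_eq_getElem (by omega : i < S.length)]
    simp
  · rw [List.getElem?_set_ne (Ne.symm hij)] at hp
    exact hp

theorem stmt11 {α : Type*} [Fintype α] (hcard : 4 ≤ Fintype.card α)
    (S P : List α) (hsub : (occ P S).Nonempty) (τ k : ℕ)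
    (hτ : 1 ≤ τ) (hτn : τ ≤ S.length) (hk : 1 ≤ k) (hkn : k ≤ S.length) :
    (∀ S' : List α, S'.length = S.length → hamming S S' ≤ k →
      τ ≤ (occ P S').card) ↔
    (∀ S'' : List (Option α), S''.length = S.length →
      hamming (S.map some) S'' ≤ k → τ ≤ (occ (P.map some) S'').card) := by
  constructor
  · intro h
    have hne : Nonempty α := Fintype.card_pos_iff.mp (by omega)
    obtain ⟨d⟩ := hne
    have key : ∀ n (S'' : List (Option α)),
        S''.countP (fun x => decide (x = none)) = n →
        S''.length = S.length → hamming (S.map some) S'' ≤ k →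
        τ ≤ (occ (P.map some) S'').card := by
      intro n
      induction n using Nat.strong_induction_on with
      | _ n ih =>
        intro S'' hcnt hlen hham
        rcases Nat.eq_zero_or_pos n with h0 | hpos
        · -- no `none` letters: S'' comes from a string over α
          subst h0
          have hall : ∀ x ∈ S'', ¬ (x = none) := by
            intro x hx hxn
            have := List.countP_eq_zero.mp hcnt x hx
            simp [hxn] at this
          set S' := S''.map (fun o => o.getD d) with hS'
          have hmap : S'.map some = S'' := by
            rw [hS', List.map_map]
            conv_rhs => rw [← List.map_id S'']
            apply List.map_congr_left
            intro x hx
            cases x with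
            | none => exact absurd rfl (hall _ hx)
            | some a => rfl
          rw [← hmap, occ_map_some]
          apply h S'
          · rw [hS', List.length_map]; exact hlen
          · rw [← hmap, hamming_map_some] at hham; exact hham
        · -- there is a `none` letter, at position j
          have hex : ∃ x ∈ S'', x = none := by
            have hpos' : 0 < S''.countP (fun x => decide (x = none)) := by omega
            obtain ⟨a, ha, hp⟩ := List.countP_pos_iff.mp hpos'
            exact ⟨a, ha, by simpa using hp⟩
          obtain ⟨x, hxmem, rfl⟩ := hex
          obtain ⟨j, hj⟩ := List.mem_iff_getElem?.mp hxmem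
          have hjlen : j < S''.length := by
            by_contra hge
            rw [List.getElem?_eq_none_iff.2 (by omega)] at hj
            exact absurd hj (by simp)
          -- candidate offsets and their demanded letters
          set Q : ℕ → Prop := fun o => o ≤ j ∧
            ∀ t, t < P.length → t ≠ o →
              S''[(j - o + t)]? = (P.map some)[t]? with hQ
          set Ofin := (Finset.range P.length).filter Q with hOfin
          set f : ℕ → α := fun o => (P[o]?).getD d with hf
          set D := Ofin.image f with hD
          have hmemO : ∀ o ∈ Ofin, o < P.length ∧ o ≤ j ∧
              ∀ t, t < P.length → t ≠ o →
                S''[(j - o + t)]? = (P.map some)[t]? := by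
            intro o ho
            rw [hOfin, Finset.mem_filter, Finset.mem_range] at ho
            exact ⟨ho.1, ho.2.1, ho.2.2⟩
          have hDcard : D.card ≤ 2 := by
            by_cases hO2 : Ofin.card ≤ 2
            · exact le_trans Finset.card_image_le hO2
            · push_neg at hO2
              have hOne : Ofin.Nonempty := Finset.card_pos.mp (by omega)
              set m1 := Ofin.min' hOne with hm1
              have hm1mem : m1 ∈ Ofin := Ofin.min'_mem hOne
              have hEne : (Ofin.erase m1).Nonempty := by
                apply Finset.card_pos.mp
                rw [Finset.card_erase_of_mem hm1mem]; omega
              set m2 := (Ofin.erase m1).min' hEne with hm2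
              have hm2memE : m2 ∈ Ofin.erase m1 := Finset.min'_mem _ hEne
              have hm2mem : m2 ∈ Ofin := Finset.mem_of_mem_erase hm2memE
              have h12 : m1 < m2 :=
                lt_of_le_of_ne (Ofin.min'_le _ hm2mem)
                  (Ne.symm (Finset.ne_of_mem_erase hm2memE))
              have hsubD : D ⊆ {f m1, f m2} := by
                intro x hx
                rw [hD, Finset.mem_image] at hx
                obtain ⟨o, ho, rfl⟩ := hx
                by_cases e1 : o = m1
                · subst e1; simp
                by_cases e2 : o = m2
                · subst e2; simp
                have hoE : o ∈ Ofin.erase m1 := Finset.mem_erase.mpr ⟨e1, ho⟩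
                have h2o : m2 < o :=
                  lt_of_le_of_ne (Finset.min'_le _ _ hoE) (Ne.symm e2)
                obtain ⟨hoP, hoj, hom⟩ := hmemO o ho
                obtain ⟨h1P, h1j, h1m⟩ := hmemO m1 hm1mem
                obtain ⟨h2P, h2j, h2m⟩ := hmemO m2 hm2mem
                have htrip := triple_lemma (X := S'') h2j hoj hoP h12 h2o h1m h2m hom
                simp only [Finset.mem_insert, Finset.mem_singleton]
                left
                rw [hf]
                simp only
                rw [htrip]
              calc D.card ≤ ({f m1, f m2} : Finset α).card := Finset.card_le_card hsubD
                _ ≤ 2 := (Finset.card_insert_le _ _).trans (by simp)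
          obtain ⟨c, hc⟩ : ∃ c : α, c ∉ D := by
            by_contra hno
            push_neg at hno
            have hsubU : (Finset.univ : Finset α) ⊆ D := fun c _ => hno c
            have := Finset.card_le_card hsubU
            rw [Finset.card_univ] at this
            omega
          set T := S''.set j (some c) with hT
          have hTlen : T.length = S''.length := by rw [hT, List.length_set]
          have hTcnt : T.countP (fun x => decide (x = none)) < n := by
            rw [← hcnt, hT]; exact countP_set_lt c S'' j hj
          have hTocc : occ (P.map some) T ⊆ occ (P.map some) S'' := by
            intro i hi
            unfold occ at hi ⊢
            rw [Finset.mem_filter, Finset.mem_range] at hi ⊢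
            obtain ⟨hir, hiOcc⟩ := hi
            rw [occursAt_iff_get] at hiOcc
            obtain ⟨hiL, hig⟩ := hiOcc
            rw [List.length_map] at hiL
            rw [hTlen] at hiL hir
            by_cases hwin : i ≤ j ∧ j < i + P.length
            · exfalso
              set o := j - i with ho
              have hoP : o < P.length := by omega
              have hoO : o ∈ Ofin := by
                rw [hOfin, Finset.mem_filter, Finset.mem_range]
                refine ⟨hoP, by omega, ?_⟩
                intro t ht htne
                have hne : j ≠ i + t := by omega
                have harith : j - o + t = i + t := by omega
                rw [harith, ← List.getElem?_set_ne (l := S'') hne (a := some c), ← hT]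
                exact hig t (by rw [List.length_map]; omega)
              have hgo : T[(i + o)]? = (P.map some)[o]? :=
                hig o (by rw [List.length_map]; omega)
              have hio : i + o = j := by omega
              rw [hio, hT, List.getElem?_set_self hjlen] at hgo
              have hPo : (P.map some)[o]? = some (some (f o)) := by
                rw [List.getElem?_map, hf]
                simp only
                rw [List.getElem?_eq_getElem hoP]
                rfl
              rw [hPo] at hgo
              have hcf : c = f o := by
                simpa using hgo
              exact hc (by rw [hD]; exact Finset.mem_image.mpr ⟨o, hoO, hcf.symm⟩)
            · refine ⟨by omega, ?_⟩
              rw [occursAt_iff_get]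
              refine ⟨by rw [List.length_map]; omega, ?_⟩
              intro t ht
              rw [List.length_map] at ht
              have hne : j ≠ i + t := by omega
              rw [← List.getElem?_set_ne (l := S'') hne (a := some c), ← hT]
              exact hig t (by rw [List.length_map]; omega)
          have hTham : hamming (S.map some) T ≤ k := by
            rw [hT]
            exact le_trans (hamming_set_le hlen hj c) hham
          have hind := ih _ hTcnt T rfl (hTlen.trans hlen) hTham
          exact le_trans hind (Finset.card_le_card hTocc)
    intro S'' hlen hham
    exact key _ S'' rfl hlen hham
  · intro h S' hlen hham
    have hres := h (S'.map some) (by rw [List.length_map]; exact hlen)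
      (by rw [hamming_map_some]; exact hham)
    rwa [occ_map_some] at hres
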